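/- Let μ₀,…,μ_N ∈ ℝ and define the ℝ-action on ℂ^{N+1} by λ(t)·z = (e^{μ₀ t} z₀, …, e^{μ_N t} z_N). Let Z ⊂ ℂ^{N+1} be a nonempty closed cone invariant under this action, and suppose Z is not contained in the coordinate hyperplane {z_{i₀} = 0} for some index i₀ with μ_{i₀} = max_i μ_i. Then sup_{z ∈ Z, z ≠ 0} (Σᵢ μᵢ|zᵢ|²)/(Σᵢ|zᵢ|²) = max_i μᵢ. -/

import Mathlib

/-- For a nonempty closed cone `Z ⊂ ℂ^{N+1}` invariant under the one-parameter group
`λ(t)·z = (e^{μ₀t}z₀, …, e^{μ_N t}z_N)` and not contained in the hyperplane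
`{z_{i₀} = 0}` for some index `i₀` of maximal weight, the supremum of the weighted
Rayleigh quotient over `Z \ {0}` equals `max_i μᵢ`. -/
theorem stmt_17 (N : ℕ) (μ : Fin (N + 1) → ℝ) (Z : Set (Fin (N + 1) → ℂ))
    (hZne : Z.Nonempty) (hZcl : IsClosed Z)
    (hcone : ∀ z ∈ Z, ∀ c : ℂ, c • z ∈ Z)
    (hinv : ∀ t : ℝ, ∀ z ∈ Z, (fun i => (Real.exp (μ i * t) : ℂ) * z i) ∈ Z)
    (i₀ : Fin (N + 1)) (hmax : μ i₀ = Finset.univ.sup' Finset.univ_nonempty μ)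
    (hnot : ∃ z ∈ Z, z i₀ ≠ 0) :
    sSup {r : ℝ | ∃ z ∈ Z, z ≠ 0 ∧
        r = (∑ i, μ i * ‖z i‖ ^ 2) / (∑ i, ‖z i‖ ^ 2)} =
      Finset.univ.sup' Finset.univ_nonempty μ := by
  set M : ℝ := Finset.univ.sup' Finset.univ_nonempty μ with hM
  set S : Set ℝ := {r : ℝ | ∃ z ∈ Z, z ≠ 0 ∧
      r = (∑ i, μ i * ‖z i‖ ^ 2) / (∑ i, ‖z i‖ ^ 2)} with hS
  obtain ⟨z, hzZ, hz0⟩ := hnot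
  have hμle : ∀ i, μ i ≤ M := fun i => Finset.le_sup' μ (Finset.mem_univ i)
  -- upper bound
  have hub : ∀ r ∈ S, r ≤ M := by
    intro r hr
    obtain ⟨w, hwZ, hw0, hrw⟩ := hr
    have hden : 0 < ∑ i, ‖w i‖ ^ 2 := by
      obtain ⟨j, hj⟩ := Function.ne_iff.mp hw0
      have h0 : (0:ℝ) < ‖w j‖ ^ 2 := pow_pos (norm_pos_iff.mpr hj) 2
      exact lt_of_lt_of_le h0 (Finset.single_le_sum
        (f := fun i => ‖w i‖ ^ 2) (fun i _ => by positivity) (Finset.mem_univ j))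
    have hnum : (∑ i, μ i * ‖w i‖ ^ 2) ≤ M * ∑ i, ‖w i‖ ^ 2 := by
      rw [Finset.mul_sum]
      exact Finset.sum_le_sum fun i _ =>
        mul_le_mul_of_nonneg_right (hμle i) (by positivity)
    rw [hrw, div_le_iff₀ hden]
    exact hnum
  -- the flow of z
  set g : Fin (N + 1) → ℝ → ℝ := fun i t =>
    Real.exp (2 * (μ i - M) * t) * ‖z i‖ ^ 2 with hg
  set F : ℝ → ℝ := fun t => (∑ i, μ i * g i t) / (∑ i, g i t) with hF
  have hFS : ∀ t : ℝ, F t ∈ S := by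
    intro t
    refine ⟨fun i => (Real.exp (μ i * t) : ℂ) * z i, hinv t z hzZ, ?_, ?_⟩
    · intro h
      apply hz0
      have := congrFun h i₀
      simpa [Real.exp_ne_zero] using this
    · have habs : ∀ i, ‖(Real.exp (μ i * t) : ℂ) * z i‖ ^ 2
          = Real.exp (2 * M * t) * g i t := by
        intro i
        rw [norm_mul, Complex.norm_real, Real.norm_eq_abs, abs_of_pos (Real.exp_pos _), mul_pow, hg]
        rw [← Real.exp_nat_mul]
        push_cast
        rw [show (2:ℝ) * (μ i * t) = 2 * M * t + 2 * (μ i - M) * t by ring, Real.exp_add,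
          mul_assoc]
      rw [hF]
      simp only [habs]
      have h1 : ∀ i, μ i * (Real.exp (2 * M * t) * g i t)
          = Real.exp (2 * M * t) * (μ i * g i t) := fun i => by ring
      simp only [h1, ← Finset.mul_sum]
      rw [mul_div_mul_left _ _ (Real.exp_ne_zero _)]
  -- limits
  have hlim_g : ∀ i, Filter.Tendsto (g i) Filter.atTop
      (nhds (if μ i = M then ‖z i‖ ^ 2 else 0)) := by
    intro i
    by_cases h : μ i = M
    · simp only [h, if_pos, hg, sub_self, mul_zero, zero_mul, Real.exp_zero, one_mul]
      exact tendsto_const_nhds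
    · simp only [if_neg h, hg]
      have hneg : 2 * (μ i - M) < 0 := by
        have := lt_of_le_of_ne (hμle i) h
        linarith
      have : Filter.Tendsto (fun t => Real.exp (2 * (μ i - M) * t)) Filter.atTop (nhds 0) := by
        apply Real.tendsto_exp_atBot.comp
        exact Filter.Tendsto.const_mul_atTop_of_neg hneg Filter.tendsto_id
      simpa using this.mul_const _
  set L : Fin (N + 1) → ℝ := fun i => if μ i = M then ‖z i‖ ^ 2 else 0 with hL
  have hLpos : 0 < ∑ i, L i := by
    have : (0:ℝ) < L i₀ := by
      rw [hL]
      simp only [hmax, ← hM, if_pos]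
      exact pow_pos (norm_pos_iff.mpr hz0) 2
    exact lt_of_lt_of_le this (Finset.single_le_sum
      (fun i _ => by rw [hL]; dsimp only; split <;> positivity) (Finset.mem_univ i₀))
  have hML : ∀ i, μ i * L i = M * L i := by
    intro i
    rw [hL]; dsimp only; split
    · rename_i h; rw [h]
    · simp
  have hlim_num : Filter.Tendsto (fun t => ∑ i, μ i * g i t) Filter.atTop
      (nhds (∑ i, μ i * L i)) :=
    tendsto_finset_sum _ fun i _ => (hlim_g i).const_mul _
  have hlim_den : Filter.Tendsto (fun t => ∑ i, g i t) Filter.atTop (nhds (∑ i, L i)) :=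
    tendsto_finset_sum _ fun i _ => hlim_g i
  have hlimF : Filter.Tendsto F Filter.atTop (nhds M) := by
    have := hlim_num.div hlim_den hLpos.ne'
    have heq : (∑ i, μ i * L i) / (∑ i, L i) = M := by
      simp only [hML, ← Finset.mul_sum]
      exact mul_div_cancel_right₀ M hLpos.ne'
    rwa [heq] at this
  -- conclude
  have hSne : S.Nonempty := ⟨F 0, hFS 0⟩
  have hbdd : BddAbove S := ⟨M, hub⟩
  refine le_antisymm (csSup_le hSne hub) ?_
  refine le_of_tendsto hlimF (Filter.Eventually.of_forall fun t => le_csSup hbdd (hFS t))
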